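/- Let k ⊂ k' be an extension of separably closed fields of characteristic p, V a finite-dimensional k-vector space, and F : V → V a Frobenius-semilinear map. Then the inclusion V → k' ⊗_k V induces an isomorphism on fixed points: {v ∈ V : F(v) = v} → {w ∈ k' ⊗_k V : F'(w) = w}, where F' = φ_{k'} ⊗ F is the induced semilinear endomorphism. -/

import Mathlib

open scoped TensorProduct


lemma aux_pow_mem {p : ℕ} [Fact p.Prime] {k k' : Type*} [Field k] [IsSepClosed k] [CharP k p]
    [Field k'] [Algebra k k'] (x : k') (hx : IsIntegral k x) :
    ∃ n : ℕ, x ^ p ^ n ∈ (algebraMap k k').range := by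
  haveI : ExpChar k p := ExpChar.prime Fact.out
  let K := IntermediateField.adjoin k ({x} : Set k')
  haveI : FiniteDimensional k K := IntermediateField.adjoin.finiteDimensional hx
  haveI : IsPurelyInseparable k K := inferInstance
  obtain ⟨n, y, hy⟩ := IsPurelyInseparable.pow_mem k p
    (⟨x, IntermediateField.mem_adjoin_simple_self k x⟩ : K)
  refine ⟨n, y, ?_⟩
  have := congrArg (algebraMap K k') hy
  rwa [← IsScalarTower.algebraMap_apply, map_pow] at this

-- integrality in the invertible case
lemma aux_integral {p : ℕ} [Fact p.Prime] {k k' : Type*} [Field k] [CharP k p]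
    [Field k'] [Algebra k k'] {ι : Type} [Fintype ι] [DecidableEq ι]
    (B : ι → ι → k) (c : ι → k')
    (hps : ∀ j, c j ^ p = ∑ l, algebraMap k k' (B j l) * c l) (i : ι) :
    IsIntegral k (c i) := by
  haveI : CharP k' p := charP_of_injective_algebraMap (algebraMap k k').injective p
  have hp1 : 2 ≤ p := (Fact.out : p.Prime).two_le
  set φ := algebraMap k k' with hφ
  set U : Submodule k k' := Submodule.span k (Set.range c) with hUdef
  have hmemU : ∀ j, c j ∈ U := fun j => Submodule.subset_span ⟨j, rfl⟩
  have hppow : ∀ x ∈ U, x ^ p ∈ U := by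
    intro x hx
    induction hx using Submodule.span_induction with
    | mem x hxr =>
      obtain ⟨j, rfl⟩ := hxr
      rw [hps j]
      exact Submodule.sum_mem _ fun l _ => by
        rw [← Algebra.smul_def]; exact Submodule.smul_mem _ _ (hmemU l)
    | zero => rw [zero_pow (by positivity : p ≠ 0)]; exact Submodule.zero_mem U
    | add x y _ _ hx hy => rw [add_pow_char]; exact Submodule.add_mem _ hx hy
    | smul a x _ hx =>
      rw [Algebra.smul_def, mul_pow, ← map_pow, ← Algebra.smul_def]
      exact Submodule.smul_mem _ _ hx
  have hU : ∀ (m : ℕ) (j : ι), c j ^ p ^ (m + 1) ∈ U := by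
    intro m
    induction m with
    | zero => intro j; simpa using hppow _ (hmemU j)
    | succ m ih => intro j; rw [pow_succ, pow_mul]; exact hppow _ (ih j)
  haveI : FiniteDimensional k U := FiniteDimensional.span_of_finite k (Set.finite_range c)
  set d := Module.finrank k U with hd
  have hnli : ¬ LinearIndependent k (fun m : Fin (d + 1) => (⟨c i ^ p ^ ((m : ℕ) + 1), hU _ i⟩ : U)) := by
    intro h
    have := h.fintype_card_le_finrank
    simp [hd] at this
  obtain ⟨g, hsum, m₀, hm₀⟩ := Fintype.not_linearIndependent_iff.mp hnli
  -- build the polynomial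
  set q : Polynomial k := ∑ m : Fin (d + 1), Polynomial.C (g m) * Polynomial.X ^ (p ^ ((m : ℕ) + 1)) with hq
  have hqne : q ≠ 0 := by
    intro h0
    apply hm₀
    have := congrArg (fun r => Polynomial.coeff r (p ^ ((m₀ : ℕ) + 1))) h0
    simp only [hq, Polynomial.finset_sum_coeff, Polynomial.coeff_C_mul,
      Polynomial.coeff_X_pow, Polynomial.coeff_zero, mul_ite, mul_one, mul_zero] at this
    rw [Finset.sum_eq_single m₀] at this
    · simpa using this
    · intro b _ hb
      rw [if_neg]
      intro hbeq
      exact hb (Fin.ext (by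
        have := Nat.pow_right_injective hp1 hbeq
        omega))
    · simp
  have haq : Polynomial.aeval (c i) q = 0 := by
    have hsum' := congrArg (Subtype.val : U → k') hsum
    push_cast [Submodule.coe_sum] at hsum'
    simp only [hq, map_sum, map_mul, Polynomial.aeval_C, map_pow, Polynomial.aeval_X]
    simpa [Algebra.smul_def] using hsum'
  exact (isAlgebraic_iff_isIntegral).mp ⟨q, hqne, haq⟩


lemma aux_descent {p : ℕ} [Fact p.Prime] {k k' : Type*} [Field k] [IsSepClosed k] [CharP k p]
    [Field k'] [Algebra k k'] :
    ∀ (n : ℕ) (ι : Type) (_ : Fintype ι) (_ : DecidableEq ι), Fintype.card ι = n →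
    ∀ (A : ι → ι → k) (c : ι → k'),
    (∀ i, c i = ∑ j, algebraMap k k' (A i j) * c j ^ p) →
    ∀ i, c i ∈ (algebraMap k k').range := by
  haveI : CharP k' p := charP_of_injective_algebraMap (algebraMap k k').injective p
  set φ := algebraMap k k' with hφ
  intro n
  induction n using Nat.strong_induction_on with
  | _ n IH =>
  intro ι _ _ hcard A c hc
  set M : Matrix ι ι k := Matrix.of A with hM
  by_cases hdet : IsUnit M.det
  · -- invertible case
    set B : Matrix ι ι k := M⁻¹ with hB
    have hMB : (M.map φ) * (B.map φ) = 1 := by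
      rw [← Matrix.map_mul, Matrix.mul_nonsing_inv _ hdet, Matrix.map_one φ (map_zero φ) (map_one φ)]
    have hBM : (B.map φ) * (M.map φ) = 1 := mul_eq_one_comm.mp hMB
    have hcvec : c = (M.map φ).mulVec (fun j => c j ^ p) := by
      funext i
      rw [hc i]
      simp [Matrix.mulVec, dotProduct, hM]
    have hps : ∀ j, c j ^ p = ∑ l, φ (B j l) * c l := by
      have h2 : (B.map φ).mulVec c = (fun j => c j ^ p) := by
        conv_lhs => rw [hcvec]
        rw [Matrix.mulVec_mulVec, hBM, Matrix.one_mulVec]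
      intro j
      rw [← congrFun h2 j]
      simp [Matrix.mulVec, dotProduct]
    -- integrality
    have hint : ∀ j, IsIntegral k (c j) := aux_integral B c hps
    -- pow mem
    have hpm : ∀ j, ∃ m : ℕ, c j ^ p ^ m ∈ φ.range := fun j => aux_pow_mem (c j) (hint j)
    choose mfun hmfun using hpm
    set N := Finset.univ.sup mfun with hN
    have hpmN : ∀ j, c j ^ p ^ N ∈ φ.range := by
      intro j
      have hle : mfun j ≤ N := Finset.le_sup (Finset.mem_univ j)
      have : c j ^ p ^ N = (c j ^ p ^ mfun j) ^ p ^ (N - mfun j) := by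
        rw [← pow_mul, ← pow_add, Nat.add_sub_cancel' hle]
      rw [this]
      exact pow_mem (hmfun j) _
    -- expansion in high p-powers
    have hQ : ∀ (m : ℕ) (i : ι), ∃ lam : ι → k, c i = ∑ j, φ (lam j) * c j ^ p ^ m := by
      intro m
      induction m with
      | zero =>
        intro i
        refine ⟨fun j => if j = i then 1 else 0, ?_⟩
        simp [Finset.sum_ite_eq']
      | succ m ih =>
        intro i
        obtain ⟨lam, hlam⟩ := ih i
        refine ⟨fun l => ∑ j, lam j * A j l ^ p ^ m, ?_⟩
        rw [hlam]
        have hexp : ∀ j, c j ^ p ^ m = ∑ l, φ (A j l) ^ p ^ m * (c l ^ p) ^ p ^ m := by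
          intro j
          rw [hc j, sum_pow_char_pow]
          congr 1; funext l; rw [mul_pow]
        calc ∑ j, φ (lam j) * c j ^ p ^ m
            = ∑ j, ∑ l, φ (lam j) * (φ (A j l) ^ p ^ m * (c l ^ p) ^ p ^ m) := by
              congr 1; funext j; rw [hexp j, Finset.mul_sum]
          _ = ∑ l, ∑ j, φ (lam j) * (φ (A j l) ^ p ^ m * (c l ^ p) ^ p ^ m) := Finset.sum_comm
          _ = ∑ l, φ (∑ j, lam j * A j l ^ p ^ m) * c l ^ p ^ (m + 1) := by
              congr 1; funext l
              rw [map_sum, Finset.sum_mul]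
              congr 1; funext j
              rw [map_mul, map_pow, ← pow_mul, ← pow_succ', mul_assoc]
      -- done
    intro i
    obtain ⟨lam, hlam⟩ := hQ N i
    rw [hlam]
    apply Subring.sum_mem
    intro j _
    exact Subring.mul_mem _ (RingHom.mem_range_self φ _) (hpmN j)
  · -- singular case
    have hdet0 : M.det = 0 := by
      by_contra h
      exact hdet (isUnit_iff_ne_zero.mpr h)
    obtain ⟨u, hu0, huM⟩ := Matrix.exists_vecMul_eq_zero_iff.mpr hdet0
    obtain ⟨i₀, hi₀⟩ := Function.ne_iff.mp hu0
    have hu : u i₀ ≠ 0 := by simpa using hi₀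
    -- the linear relation
    have hrel : ∑ i, φ (u i) * c i = 0 := by
      calc ∑ i, φ (u i) * c i
          = ∑ i, ∑ j, φ (u i) * (φ (A i j) * c j ^ p) := by
            congr 1; funext i; rw [hc i, Finset.mul_sum]
        _ = ∑ j, φ (∑ i, u i * A i j) * c j ^ p := by
            rw [Finset.sum_comm]
            congr 1; funext j
            rw [map_sum, Finset.sum_mul]
            congr 1; funext i
            rw [map_mul, mul_assoc]
        _ = 0 := by
            apply Finset.sum_eq_zero
            intro j _
            have : ∑ i, u i * A i j = 0 := congrFun huM j
            rw [this, map_zero, zero_mul]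
    set v : ι → k := fun j => - u j / u i₀ with hv
    have hne : φ (u i₀) ≠ 0 := fun h => hu ((map_eq_zero φ).mp h)
    have hrel2 : φ (u i₀) * c i₀ + ∑ j ∈ Finset.univ.erase i₀, φ (u j) * c j = 0 := by
      rw [Finset.add_sum_erase Finset.univ (fun i => φ (u i) * c i) (Finset.mem_univ i₀)]
      exact hrel
    have hci₀ : c i₀ = ∑ j ∈ Finset.univ.erase i₀, φ (v j) * c j := by
      apply mul_left_cancel₀ hne
      rw [Finset.mul_sum]
      have : ∀ j ∈ Finset.univ.erase i₀, φ (u i₀) * (φ (v j) * c j) = - (φ (u j) * c j) := by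
        intro j _
        rw [← mul_assoc, ← map_mul, hv]
        have : u i₀ * (-u j / u i₀) = - u j := by field_simp
        rw [this, map_neg, neg_mul]
      rw [Finset.sum_congr rfl this, Finset.sum_neg_distrib]
      linear_combination hrel2
    -- pass to the subtype
    have hcard' : Fintype.card {j : ι // j ≠ i₀} < n := by
      rw [← hcard]
      exact Fintype.card_subtype_lt (x := i₀) (by simp)
    set A' : {j : ι // j ≠ i₀} → {j : ι // j ≠ i₀} → k :=
      fun i j => A i j + A i i₀ * v j ^ p with hA'
    set c' : {j : ι // j ≠ i₀} → k' := fun j => c j with hc'def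
    have herase : ∀ (f : ι → k'),
        ∑ j ∈ Finset.univ.erase i₀, f j = ∑ j : {j : ι // j ≠ i₀}, f j := by
      intro f
      exact Finset.sum_subtype _ (by simp [Finset.mem_erase]) f
    have hc'' : ∀ i : {j : ι // j ≠ i₀},
        c' i = ∑ j : {j : ι // j ≠ i₀}, φ (A' i j) * c' j ^ p := by
      intro i
      have e1 : c (i : ι) = φ (A i i₀) * c i₀ ^ p
          + ∑ j ∈ Finset.univ.erase i₀, φ (A i j) * c j ^ p := by
        rw [hc (i : ι), ← Finset.add_sum_erase Finset.univ _ (Finset.mem_univ i₀)]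
      have e2 : c i₀ ^ p = ∑ j ∈ Finset.univ.erase i₀, φ (v j) ^ p * c j ^ p := by
        rw [hci₀, sum_pow_char]
        exact Finset.sum_congr rfl fun j _ => by rw [mul_pow]
      show c (i : ι) = _
      rw [← herase (fun j => φ (A i j + A i i₀ * v j ^ p) * c j ^ p)]
      rw [e1, e2, Finset.mul_sum, ← Finset.sum_add_distrib]
      exact Finset.sum_congr rfl fun j _ => by
        rw [map_add, map_mul, map_pow]; ring
    have hmem := IH _ hcard' {j : ι // j ≠ i₀} inferInstance inferInstance rfl A' c' hc''
    intro i
    by_cases hii : i = i₀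
    · subst hii
      rw [hci₀]
      apply Subring.sum_mem
      intro j hj
      exact Subring.mul_mem _ (RingHom.mem_range_self φ _)
        (hmem ⟨j, (Finset.mem_erase.mp hj).1⟩)
    · exact hmem ⟨i, hii⟩


lemma aux_inj {k k' V : Type*} [Field k] [Field k'] [Algebra k k']
    [AddCommGroup V] [Module k V] {ι : Type*} (b : Module.Basis ι k V) :
    Function.Injective (fun v : V => (1 : k') ⊗ₜ[k] v) := by
  intro v w h
  apply b.repr.injective
  ext i
  have h1 := congrArg (fun z => (b.baseChange k').repr z i) h
  simp only [Module.Basis.baseChange_repr_tmul] at h1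
  have h2 : algebraMap k k' (b.repr v i) = algebraMap k k' (b.repr w i) := by
    simpa [Algebra.algebraMap_eq_smul_one] using h1
  exact (algebraMap k k').injective h2

/-- Let `k ⊂ k'` be an extension of separably closed fields of characteristic
`p`, `V` a finite-dimensional `k`-vector space, and `F : V → V` a Frobenius-semilinear map.
Let `F'` be the induced semilinear endomorphism `φ_{k'} ⊗ F` of `k' ⊗_k V` (hypothesized via
its values on pure tensors).  Then `v ↦ 1 ⊗ v` induces a bijection on fixed points
`{v ∈ V : F v = v} → {w ∈ k' ⊗_k V : F' w = w}`. -/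
theorem stmt11 (p : ℕ) [Fact p.Prime] (k k' V : Type*) [Field k] [IsSepClosed k] [CharP k p]
    [Field k'] [IsSepClosed k'] [CharP k' p] [Algebra k k']
    [AddCommGroup V] [Module k V] [FiniteDimensional k V]
    (F : V → V)
    (hFadd : ∀ x y, F (x + y) = F x + F y)
    (hFsemi : ∀ (c : k) (v : V), F (c • v) = c ^ p • F v)
    (F' : k' ⊗[k] V → k' ⊗[k] V)
    (hF'add : ∀ x y, F' (x + y) = F' x + F' y)
    (hF' : ∀ (c : k') (v : V), F' (c ⊗ₜ[k] v) = (c ^ p) ⊗ₜ[k] F v) :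
    Function.Bijective (fun v : {v : V // F v = v} =>
      (⟨(1 : k') ⊗ₜ[k] (v : V), by simp [hF', v.2]⟩ : {w : k' ⊗[k] V // F' w = w})) := by
  set φ := algebraMap k k' with hφ
  set n := Module.finrank k V with hn
  let b : Module.Basis (Fin n) k V := Module.finBasis k V
  constructor
  · intro x y hxy
    exact Subtype.ext (aux_inj b (congrArg Subtype.val hxy))
  · rintro ⟨w, hw⟩
    let F'hom : k' ⊗[k] V →+ k' ⊗[k] V := AddMonoidHom.mk' F' hF'add
    set c : Fin n → k' := fun i => (b.baseChange k').repr w i with hc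
    have hw1 : w = ∑ i, c i ⊗ₜ[k] b i := by
      conv_lhs => rw [← (b.baseChange k').sum_repr w]
      refine Finset.sum_congr rfl fun i _ => ?_
      rw [Module.Basis.baseChange_apply, TensorProduct.smul_tmul', smul_eq_mul, mul_one]
    set A : Fin n → Fin n → k := fun i j => b.repr (F (b j)) i with hA
    have hFb : ∀ j, F (b j) = ∑ i, A i j • b i := fun j => (b.sum_repr (F (b j))).symm
    have hF'w : F' w = ∑ i, (∑ j, φ (A i j) * c j ^ p) ⊗ₜ[k] b i := by
      conv_lhs => rw [hw1]
      have hms : F' (∑ i, c i ⊗ₜ[k] b i) = ∑ i, F' (c i ⊗ₜ[k] b i) :=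
        map_sum F'hom _ _
      rw [hms]
      have hterm : ∀ j, F' (c j ⊗ₜ[k] b j) = ∑ i, (φ (A i j) * c j ^ p) ⊗ₜ[k] b i := by
        intro j
        rw [hF', hFb j, TensorProduct.tmul_sum]
        refine Finset.sum_congr rfl fun i _ => ?_
        rw [TensorProduct.tmul_smul, TensorProduct.smul_tmul', Algebra.smul_def]
      rw [Finset.sum_congr rfl fun j _ => hterm j, Finset.sum_comm]
      exact Finset.sum_congr rfl fun i _ => (TensorProduct.sum_tmul _ _ _).symm
    have hce : ∀ i, c i = ∑ j, φ (A i j) * c j ^ p := by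
      intro i
      have h1 : (b.baseChange k').repr (F' w) i = ∑ j, φ (A i j) * c j ^ p := by
        rw [hF'w, map_sum]
        have : ∀ i', ((b.baseChange k').repr ((∑ j, φ (A i' j) * c j ^ p) ⊗ₜ[k] b i')) i
            = if i' = i then ∑ j, φ (A i j) * c j ^ p else 0 := by
          intro i'
          rw [Module.Basis.baseChange_repr_tmul, Module.Basis.repr_self, Finsupp.single_apply]
          split_ifs with h
          · subst h; rw [one_smul]
          · rw [zero_smul]
        rw [Finset.sum_apply']
        rw [Finset.sum_congr rfl fun i' _ => this i', Finset.sum_ite_eq' Finset.univ i]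
        simp
      rw [hc, ← h1, hw]
    have hrange := aux_descent (p := p) n (Fin n) inferInstance inferInstance
      (Fintype.card_fin n) A c hce
    choose dfun hd using hrange
    set v : V := ∑ i, dfun i • b i with hv
    have h1v : (1 : k') ⊗ₜ[k] v = w := by
      rw [hv, TensorProduct.tmul_sum, hw1]
      refine Finset.sum_congr rfl fun i _ => ?_
      rw [TensorProduct.tmul_smul, ← algebraMap_smul k' (dfun i) ((1:k') ⊗ₜ[k] b i),
        hd i, TensorProduct.smul_tmul', smul_eq_mul, mul_one]
    have hFv : F v = v := by
      apply aux_inj (k' := k') b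
      show (1 : k') ⊗ₜ[k] F v = (1 : k') ⊗ₜ[k] v
      have : (1 : k') ⊗ₜ[k] F v = F' ((1 : k') ⊗ₜ[k] v) := by
        rw [hF', one_pow]
      rw [this, h1v, hw]
    exact ⟨⟨v, hFv⟩, Subtype.ext h1v⟩
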